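/- Let q = p^h with p an odd prime and h > 1, let σ = p^i with 1 ≤ i ≤ h − 1, let m be a non-square in GF(q), and let k be an integer with 0 ≤ k ≤ (q − 1)/2. Then for every x ∈ GF(q) with x ≠ 0, the map t ↦ x·t − (m/x^{2k+1})·t^σ is a bijection of GF(q). (Hence the points (x : −m/x^{2k+1} : 1 : 0), x ≠ 0, all lie in the carrier of the critical cone of the star flock F(t, t^σ, 0).) -/

import Mathlib

/-- Let `q = p^h`, `p` an odd prime, `h > 1`, `σ = p^i` with
`1 ≤ i ≤ h−1`, let `m` be a non-square in `GF(q)` and `0 ≤ k ≤ (q−1)/2`.  Then for every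
`x ≠ 0` the map `t ↦ x·t − (m/x^{2k+1})·t^σ` is a bijection of `GF(q)`.  (Hence the
points `(x : −m/x^{2k+1} : 1 : 0)`, `x ≠ 0`, all lie in the carrier of the critical cone
of the star flock `F(t, t^σ, 0)`.) -/
theorem stmt_15 (p h i : ℕ) (hp : p.Prime) (hpodd : Odd p) (hh : 1 < h)
    (hi1 : 1 ≤ i) (hi2 : i ≤ h - 1)
    (F : Type) [Field F] [Fintype F] (hF : Fintype.card F = p ^ h)
    (m : F) (hm : ¬ ∃ s : F, s ^ 2 = m)
    (k : ℕ) (hk : k ≤ (p ^ h - 1) / 2) :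
    ∀ x : F, x ≠ 0 →
      Function.Bijective (fun t => x * t - m / x ^ (2 * k + 1) * t ^ (p ^ i)) := by
  -- establish characteristic p
  have hr : CharP F (ringChar F) := ringChar.charP F
  obtain ⟨n, hrp, hcard⟩ := FiniteField.card F (ringChar F)
  have hdvd : ringChar F ∣ p ^ h := by
    rw [← hF, hcard]; exact dvd_pow_self _ n.pos.ne'
  have hrpe : ringChar F = p :=
    ((Nat.prime_dvd_prime_iff_eq hrp hp).mp (hrp.dvd_of_dvd_pow hdvd))
  haveI : CharP F p := hrpe ▸ hr
  haveI : Fact p.Prime := ⟨hp⟩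
  -- p^i is odd
  have hpiodd : Odd (p ^ i) := hpodd.pow
  obtain ⟨j, hj⟩ : ∃ j, p ^ i - 1 = 2 * j := by
    obtain ⟨j, hj⟩ := hpiodd
    exact ⟨j, by omega⟩
  have hpi1 : 1 ≤ p ^ i := Nat.one_le_pow _ _ hp.pos
  have hm0 : m ≠ 0 := by
    rintro rfl; exact hm ⟨0, by simp⟩
  intro x hx
  have hxp : (x : F) ^ (2 * k + 1) ≠ 0 := pow_ne_zero _ hx
  have hinj : Function.Injective
      (fun t : F => x * t - m / x ^ (2 * k + 1) * t ^ (p ^ i)) := by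
    intro a b hab
    simp only at hab
    by_contra hne
    set u := a - b with hu
    have hu0 : u ≠ 0 := sub_ne_zero.mpr hne
    have hfrob : u ^ (p ^ i) = a ^ (p ^ i) - b ^ (p ^ i) := sub_pow_char_pow a b i
    have key : x * u = m / x ^ (2 * k + 1) * u ^ (p ^ i) := by
      rw [hfrob, hu]; linear_combination hab
    -- x * u = c * u^{p^i} = c * u * u^{2j}
    have hsplit : u ^ (p ^ i) = u * u ^ (2 * j) := by
      rw [← pow_succ']; congr 1; omega
    have hxc : x = m / x ^ (2 * k + 1) * u ^ (2 * j) := by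
      have := key
      rw [hsplit] at this
      field_simp at this ⊢
      have h2 : x * u * x ^ (2 * k + 1) = m * (u * u ^ (2 * j)) := by
        linear_combination u * this
      have := mul_right_cancel₀ hu0 (by linear_combination h2 :
        x * x ^ (2 * k + 1) * u = m * u ^ (2 * j) * u)
      linear_combination this
    have : ((x ^ (k + 1)) / u ^ j) ^ 2 = m := by
      have hx2 : x ^ (2 * k + 2) = m * u ^ (2 * j) := by
        have := hxc
        field_simp at this
        linear_combination this
      field_simp
      linear_combination hx2
    exact hm ⟨_, this⟩
  exact Finite.injective_iff_bijective.mp hinj
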